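/- arXiv:2605.08539 — 2 statements merged into one kernel-verified Lean document; each statement's English description precedes it below -/
import Mathlib

section
/- Let x solve x' = Δ(u(t))·(A x + B(u(t))·u(t)) and ξ solve ξ' = Δ(v(t))·(A ξ + B(v(t))·v(t)) on [0,1], both with zero initial condition, where |u(t) − v(t)| ≤ L_u·τ for all t. Assume Δ, B are Lipschitz with constants L_Δ, L_B, and uniform bounds M_Δ = sup Δ, M_B = sup ‖B‖, M_u = sup(|u|,|v|) over the relevant ranges. Then for all t ∈ [0,1], ‖ξ(t) − x(t)‖ ≤ [(M_Δ(L_B M_u + M_B)L_u + L_Δ L_u M_B M_u·exp(M_Δ‖A‖))/(M_Δ‖A‖)]·(exp(M_Δ‖A‖·t) − 1)·τ. -/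
open Set

/-- Continuous perturbation bound (Lemma 1, continuous step): two trajectories
of the SSM dynamics driven by inputs `u` and `v` with `|u − v| ≤ Lu·τ` differ by
at most `K·(exp(MΔ‖A‖·t) − 1)·τ`, where
`K = (MΔ(L_B·Mu + MB)·Lu + LΔ·Lu·MB·Mu·exp(MΔ‖A‖))/(MΔ‖A‖)`. -/
theorem continuous_perturbation_bound {n : ℕ}
    (A : EuclideanSpace ℝ (Fin n) →L[ℝ] EuclideanSpace ℝ (Fin n))
    (hA : 0 < ‖A‖)
    (u v : ℝ → ℝ) (hu : Continuous u) (hv : Continuous v)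
    (B : ℝ → EuclideanSpace ℝ (Fin n)) (Δ : ℝ → ℝ)
    (LB LΔ Lu MB Mu MΔ τ : ℝ)
    (hLB : 0 ≤ LB) (hLΔ : 0 ≤ LΔ) (hLu : 0 ≤ Lu)
    (hMB : 0 ≤ MB) (hMu : 0 ≤ Mu) (hMΔ : 0 < MΔ) (hτ : 0 < τ)
    (hBLip : ∀ s t : ℝ, ‖B s - B t‖ ≤ LB * |s - t|)
    (hΔLip : ∀ s t : ℝ, |Δ s - Δ t| ≤ LΔ * |s - t|)
    (hΔpos : ∀ w : ℝ, 0 < Δ w)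
    (hclose : ∀ t ∈ Icc (0:ℝ) 1, |u t - v t| ≤ Lu * τ)
    (hub : ∀ t ∈ Icc (0:ℝ) 1, |u t| ≤ Mu) (hvb : ∀ t ∈ Icc (0:ℝ) 1, |v t| ≤ Mu)
    (hBu : ∀ t ∈ Icc (0:ℝ) 1, ‖B (u t)‖ ≤ MB) (hBv : ∀ t ∈ Icc (0:ℝ) 1, ‖B (v t)‖ ≤ MB)
    (hΔu : ∀ t ∈ Icc (0:ℝ) 1, Δ (u t) ≤ MΔ) (hΔv : ∀ t ∈ Icc (0:ℝ) 1, Δ (v t) ≤ MΔ)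
    (x ξ : ℝ → EuclideanSpace ℝ (Fin n))
    (hx : ∀ t ∈ Icc (0:ℝ) 1,
      HasDerivAt x (Δ (u t) • (A (x t) + (u t) • B (u t))) t)
    (hξ : ∀ t ∈ Icc (0:ℝ) 1,
      HasDerivAt ξ (Δ (v t) • (A (ξ t) + (v t) • B (v t))) t)
    (hx0 : x 0 = 0) (hξ0 : ξ 0 = 0) :
    ∀ t ∈ Icc (0:ℝ) 1,
      ‖ξ t - x t‖
        ≤ (MΔ * (LB * Mu + MB) * Lu
            + LΔ * Lu * MB * Mu * Real.exp (MΔ * ‖A‖)) / (MΔ * ‖A‖)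
          * (Real.exp (MΔ * ‖A‖ * t) - 1) * τ := by
  set K : ℝ := MΔ * ‖A‖ with hKdef
  have hK : 0 < K := mul_pos hMΔ hA
  have hKne : K ≠ 0 := ne_of_gt hK
  -- Step 1: bound on ‖x t‖ via Grönwall
  have hxb : ∀ t ∈ Icc (0:ℝ) 1,
      ‖x t‖ ≤ MΔ * (Mu * MB) / K * (Real.exp (K * t) - 1) := by
    have := norm_le_gronwallBound_of_norm_deriv_right_le (a := 0) (b := 1)
      (f := x) (f' := fun t => Δ (u t) • (A (x t) + (u t) • B (u t)))
      (δ := 0) (K := K) (ε := MΔ * (Mu * MB))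
      (fun t ht => (hx t ht).continuousAt.continuousWithinAt)
      (fun t ht => (hx t (Ico_subset_Icc_self ht)).hasDerivWithinAt)
      (by simp [hx0])
      (by
        intro t ht
        have ht' := Ico_subset_Icc_self ht
        have h1 : ‖A (x t) + (u t) • B (u t)‖ ≤ ‖A‖ * ‖x t‖ + Mu * MB := by
          refine (norm_add_le _ _).trans (add_le_add (A.le_opNorm _) ?_)
          rw [norm_smul, Real.norm_eq_abs]
          exact mul_le_mul (hub t ht') (hBu t ht') (norm_nonneg _) hMu
        rw [norm_smul, Real.norm_eq_abs, abs_of_pos (hΔpos _)]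
        calc Δ (u t) * ‖A (x t) + (u t) • B (u t)‖
            ≤ MΔ * (‖A‖ * ‖x t‖ + Mu * MB) :=
              mul_le_mul (hΔu t ht') h1 (norm_nonneg _) hMΔ.le
          _ = K * ‖x t‖ + MΔ * (Mu * MB) := by rw [hKdef]; ring)
    intro t ht
    have := this t ht
    simp only [gronwallBound_of_K_ne_0 hKne, sub_zero, zero_mul, zero_add] at this
    exact this
  -- bound on forcing term
  set ε : ℝ := (MΔ * (LB * Mu + MB) * Lu
      + LΔ * Lu * MB * Mu * Real.exp K) * τ with hεdef
  have main : ∀ t ∈ Icc (0:ℝ) 1,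
      ‖ξ t - x t‖ ≤ gronwallBound 0 K ε (t - 0) := by
    refine norm_le_gronwallBound_of_norm_deriv_right_le
      (f := fun t => ξ t - x t)
      (f' := fun t => Δ (v t) • (A (ξ t) + (v t) • B (v t))
        - Δ (u t) • (A (x t) + (u t) • B (u t)))
      (fun t ht => ((hξ t ht).sub (hx t ht)).continuousAt.continuousWithinAt)
      (fun t ht => (((hξ t (Ico_subset_Icc_self ht)).sub
        (hx t (Ico_subset_Icc_self ht)))).hasDerivWithinAt)
      (by simp [hx0, hξ0]) ?_
    intro t ht
    have ht' := Ico_subset_Icc_self ht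
    show ‖Δ (v t) • (A (ξ t) + (v t) • B (v t))
        - Δ (u t) • (A (x t) + (u t) • B (u t))‖ ≤ K * ‖ξ t - x t‖ + ε
    have hdecomp : Δ (v t) • (A (ξ t) + (v t) • B (v t))
        - Δ (u t) • (A (x t) + (u t) • B (u t))
        = Δ (v t) • (A (ξ t - x t))
          + (Δ (v t) - Δ (u t)) • (A (x t) + (v t) • B (v t))
          + Δ (u t) • ((v t) • B (v t) - (u t) • B (u t)) := by
      simp only [map_sub, smul_sub, sub_smul, smul_add]
      abel
    rw [hdecomp]
    have hLuτ : 0 ≤ Lu * τ := mul_nonneg hLu hτ.le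
    -- term 1
    have h1 : ‖Δ (v t) • (A (ξ t - x t))‖ ≤ K * ‖ξ t - x t‖ := by
      rw [norm_smul, Real.norm_eq_abs, abs_of_pos (hΔpos _), hKdef, mul_assoc]
      exact mul_le_mul (hΔv t ht') (A.le_opNorm _) (norm_nonneg _) hMΔ.le
    -- term 2
    have hΔd : |Δ (v t) - Δ (u t)| ≤ LΔ * (Lu * τ) := by
      calc |Δ (v t) - Δ (u t)| ≤ LΔ * |v t - u t| := hΔLip _ _
        _ = LΔ * |u t - v t| := by rw [abs_sub_comm]
        _ ≤ LΔ * (Lu * τ) := mul_le_mul_of_nonneg_left (hclose t ht') hLΔ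
    have hAx : ‖A (x t)‖ ≤ Mu * MB * (Real.exp (K * t) - 1) := by
      calc ‖A (x t)‖ ≤ ‖A‖ * ‖x t‖ := A.le_opNorm _
        _ ≤ ‖A‖ * (MΔ * (Mu * MB) / K * (Real.exp (K * t) - 1)) :=
            mul_le_mul_of_nonneg_left (hxb t ht') (norm_nonneg _)
        _ = Mu * MB * (Real.exp (K * t) - 1) := by
            have h1 : MΔ * (Mu * MB) / K = Mu * MB / ‖A‖ := by
              rw [hKdef, mul_div_mul_left _ _ (ne_of_gt hMΔ)]
            rw [h1, ← mul_assoc, mul_div_cancel₀ _ (ne_of_gt hA)]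
    have hvBv : ‖(v t) • B (v t)‖ ≤ Mu * MB := by
      rw [norm_smul, Real.norm_eq_abs]
      exact mul_le_mul (hvb t ht') (hBv t ht') (norm_nonneg _) hMu
    have hexp : Real.exp (K * t) ≤ Real.exp K := by
      apply Real.exp_le_exp.2
      nlinarith [ht'.2, ht'.1, hK]
    have h2 : ‖(Δ (v t) - Δ (u t)) • (A (x t) + (v t) • B (v t))‖
        ≤ LΔ * (Lu * τ) * (Mu * MB * Real.exp K) := by
      rw [norm_smul, Real.norm_eq_abs]
      have hsum : ‖A (x t) + (v t) • B (v t)‖ ≤ Mu * MB * Real.exp K := by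
        calc ‖A (x t) + (v t) • B (v t)‖ ≤ ‖A (x t)‖ + ‖(v t) • B (v t)‖ :=
              norm_add_le _ _
          _ ≤ Mu * MB * (Real.exp (K * t) - 1) + Mu * MB := add_le_add hAx hvBv
          _ = Mu * MB * Real.exp (K * t) := by ring
          _ ≤ Mu * MB * Real.exp K :=
              mul_le_mul_of_nonneg_left hexp (mul_nonneg hMu hMB)
      exact mul_le_mul hΔd hsum (norm_nonneg _) (mul_nonneg hLΔ hLuτ)
    -- term 3
    have h3 : ‖Δ (u t) • ((v t) • B (v t) - (u t) • B (u t))‖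
        ≤ MΔ * (Mu * (LB * (Lu * τ)) + Lu * τ * MB) := by
      rw [norm_smul, Real.norm_eq_abs, abs_of_pos (hΔpos _)]
      have hd : ‖(v t) • B (v t) - (u t) • B (u t)‖
          ≤ Mu * (LB * (Lu * τ)) + Lu * τ * MB := by
        have : (v t) • B (v t) - (u t) • B (u t)
            = (v t) • (B (v t) - B (u t)) + (v t - u t) • B (u t) := by
          simp only [smul_sub, sub_smul]; abel
        rw [this]
        refine (norm_add_le _ _).trans (add_le_add ?_ ?_)
        · rw [norm_smul, Real.norm_eq_abs]
          refine mul_le_mul (hvb t ht') ?_ (norm_nonneg _) hMu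
          calc ‖B (v t) - B (u t)‖ ≤ LB * |v t - u t| := hBLip _ _
            _ = LB * |u t - v t| := by rw [abs_sub_comm]
            _ ≤ LB * (Lu * τ) := mul_le_mul_of_nonneg_left (hclose t ht') hLB
        · rw [norm_smul, Real.norm_eq_abs]
          have : |v t - u t| ≤ Lu * τ := by rw [abs_sub_comm]; exact hclose t ht'
          exact mul_le_mul this (hBu t ht') (norm_nonneg _) hLuτ
      exact mul_le_mul (hΔu t ht') hd (norm_nonneg _) hMΔ.le
    calc ‖Δ (v t) • (A (ξ t - x t))
          + (Δ (v t) - Δ (u t)) • (A (x t) + (v t) • B (v t))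
          + Δ (u t) • ((v t) • B (v t) - (u t) • B (u t))‖
        ≤ ‖Δ (v t) • (A (ξ t - x t))
            + (Δ (v t) - Δ (u t)) • (A (x t) + (v t) • B (v t))‖
          + ‖Δ (u t) • ((v t) • B (v t) - (u t) • B (u t))‖ := norm_add_le _ _
      _ ≤ (‖Δ (v t) • (A (ξ t - x t))‖
            + ‖(Δ (v t) - Δ (u t)) • (A (x t) + (v t) • B (v t))‖)
          + ‖Δ (u t) • ((v t) • B (v t) - (u t) • B (u t))‖ :=
            add_le_add_left (norm_add_le _ _) _
      _ ≤ (K * ‖ξ t - x t‖ + LΔ * (Lu * τ) * (Mu * MB * Real.exp K))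
          + MΔ * (Mu * (LB * (Lu * τ)) + Lu * τ * MB) :=
            add_le_add (add_le_add h1 h2) h3
      _ = K * ‖ξ t - x t‖ + ε := by rw [hεdef]; ring
  intro t ht
  have := main t ht
  simp only [gronwallBound_of_K_ne_0 hKne, sub_zero, zero_mul, zero_add] at this
  calc ‖ξ t - x t‖ ≤ ε / K * (Real.exp (K * t) - 1) := this
    _ = (MΔ * (LB * Mu + MB) * Lu
          + LΔ * Lu * MB * Mu * Real.exp (MΔ * ‖A‖)) / (MΔ * ‖A‖)
        * (Real.exp (MΔ * ‖A‖ * t) - 1) * τ := by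
        rw [hεdef, hKdef]; ring
end

section
/- Let y_k^τ be the ZOH-discretized output of an S4 system on samples u(τk) of an L_u-Lipschitz input u : [0,1] → ℝ, and let y(t) be the continuous output of the same system on u. Then for all 1 ≤ k ≤ ⌊1/τ⌋, |y_k^τ − y(τk)| ≤ (‖C‖·‖B‖·L_u·(exp(Δ‖A‖) − 1)/‖A‖)·τ, with no higher-order remainder. -/
open NormedSpace Set intervalIntegral MeasureTheory

section helpers

variable {H : Type*} [NormedAddCommGroup H] [NormedSpace ℝ H] [CompleteSpace H]

private lemma my_norm_exp_le (T : H →L[ℝ] H) : ‖exp T‖ ≤ Real.exp ‖T‖ := by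
  rw [exp_eq_tsum ℝ]
  refine (norm_tsum_le_tsum_norm (norm_expSeries_summable' (𝕂 := ℝ) T)).trans ?_
  rw [Real.exp_eq_exp_ℝ, exp_eq_tsum ℝ]
  refine Summable.tsum_le_tsum ?_ (norm_expSeries_summable' (𝕂 := ℝ) T) ?_
  · intro n
    rw [norm_smul, norm_inv, Real.norm_natCast, smul_eq_mul]
    rcases Nat.eq_zero_or_pos n with h | h
    · simp [h, pow_zero]
      exact ContinuousLinearMap.norm_id_le
    · exact mul_le_mul_of_nonneg_left (norm_pow_le' T h) (by positivity)
  · have := Real.summable_pow_div_factorial ‖T‖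
    refine this.congr fun n => ?_
    rw [smul_eq_mul]
    ring

private lemma my_hasDerivAt_exp_apply (M : H →L[ℝ] H) (v : H) (t : ℝ) :
    HasDerivAt (fun s : ℝ => exp (s • M) v) (M (exp (t • M) v)) t := by
  have h := (hasDerivAt_exp_smul_const' (𝕂 := ℝ) M t).clm_apply (hasDerivAt_const t v)
  simpa using h

private lemma exp_apply_continuous' (M : H →L[ℝ] H) (v : H) (b : ℝ) :
    Continuous fun s : ℝ => exp ((b - s) • M) v :=
  ((show Continuous (exp : (H →L[ℝ] H) → (H →L[ℝ] H)) by
      let +nondep : NormedAlgebra ℚ (H →L[ℝ] H) := .restrictScalars ℚ ℝ _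
      exact exp_continuous).comp ((continuous_const.sub continuous_id).smul
    continuous_const)).clm_apply continuous_const

private lemma zoh_integral (A Ainv : H →L[ℝ] H) (hAinv : Ainv * A = 1) (B : H) (Δ τ : ℝ) :
    Ainv ((exp (τ • (Δ • A)) - 1) B)
      = ∫ s in (0:ℝ)..τ, Δ • (exp (s • (Δ • A)) B) := by
  set M : H →L[ℝ] H := Δ • A with hM
  have hderiv : ∀ s ∈ uIcc (0:ℝ) τ,
      HasDerivAt (fun s : ℝ => exp (s • M) B) (A (Δ • (exp (s • M) B))) s := by
    intro s _
    have h := my_hasDerivAt_exp_apply M B s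
    convert h using 1
    rw [hM]
    simp only [ContinuousLinearMap.smul_apply, _root_.map_smul]
  have hcont : Continuous fun s : ℝ => Δ • (exp (s • M) B) :=
    (((show Continuous (exp : (H →L[ℝ] H) → (H →L[ℝ] H)) by
      let +nondep : NormedAlgebra ℚ (H →L[ℝ] H) := .restrictScalars ℚ ℝ _
      exact exp_continuous).comp (continuous_id.smul continuous_const)).clm_apply
      continuous_const).const_smul Δ
  have hint : IntervalIntegrable (fun s : ℝ => Δ • (exp (s • M) B)) volume 0 τ :=
    hcont.intervalIntegrable 0 τ
  have hftc := integral_eq_sub_of_hasDerivAt hderiv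
    ((A.continuous.comp hcont).intervalIntegrable 0 τ)
  rw [A.intervalIntegral_comp_comm hint] at hftc
  have hA : Ainv (A (∫ s in (0:ℝ)..τ, Δ • (exp (s • M) B)))
      = ∫ s in (0:ℝ)..τ, Δ • (exp (s • M) B) := by
    rw [← ContinuousLinearMap.comp_apply, ← ContinuousLinearMap.mul_def, hAinv,
      ContinuousLinearMap.one_apply]
  rw [← hA, hftc]
  congr 1
  simp

set_option synthInstance.maxHeartbeats 1000000 in
private lemma one_step (A : H →L[ℝ] H) (B : H) (Δ : ℝ) (u : ℝ → ℝ)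
    (x : ℝ → H) (a b : ℝ) (hab : a ≤ b) (h0 : 0 ≤ a) (h1 : b ≤ 1)
    (hu : ContinuousOn u (Icc 0 1))
    (hx : ∀ t ∈ Icc (0:ℝ) 1, HasDerivAt x (Δ • (A (x t) + (u t) • B)) t) :
    x b = exp ((b - a) • (Δ • A)) (x a)
      + ∫ s in a..b, (Δ * u s) • (exp ((b - s) • (Δ • A)) B) := by
  set M : H →L[ℝ] H := Δ • A with hM
  have hIccsub : Icc a b ⊆ Icc (0:ℝ) 1 := Icc_subset_Icc h0 h1
  have hF : ∀ s : ℝ, HasDerivAt (fun r : ℝ => exp ((b - r) • M))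
      (-(M * exp ((b - s) • M))) s := by
    intro s
    have hg : HasDerivAt (fun r : ℝ => b - r) (-1) s := (hasDerivAt_id s).const_sub b
    have h := (hasDerivAt_exp_smul_const' (𝕂 := ℝ) M (b - s)).scomp s hg
    simpa [Function.comp_def] using h
  have hφ : ∀ s ∈ uIcc a b, HasDerivAt (fun r : ℝ => exp ((b - r) • M) (x r))
      ((Δ * u s) • (exp ((b - s) • M) B)) s := by
    intro s hs
    rw [uIcc_of_le hab] at hs
    have h := (hF s).clm_apply (hx s (hIccsub hs))
    have hcomm : M * exp ((b - s) • M) = exp ((b - s) • M) * M :=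
      (((Commute.refl M).smul_right (b - s)).exp_right)
    rw [hcomm] at h
    convert h using 1
    simp only [ContinuousLinearMap.neg_apply, ContinuousLinearMap.mul_apply, map_add,
      _root_.map_smul, hM, ContinuousLinearMap.smul_apply, smul_smul]
    module
  have hcont : ContinuousOn (fun s : ℝ => (Δ * u s) • (exp ((b - s) • M) B)) (Icc a b) :=
    (continuousOn_const.mul (hu.mono hIccsub)).smul (exp_apply_continuous' M B b).continuousOn
  have hint : IntervalIntegrable (fun s : ℝ => (Δ * u s) • (exp ((b - s) • M) B))
      volume a b := by
    rw [← uIcc_of_le hab] at hcont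
    exact hcont.intervalIntegrable
  have hftc := integral_eq_sub_of_hasDerivAt hφ hint
  rw [sub_self, zero_smul, exp_zero, ContinuousLinearMap.one_apply] at hftc
  rw [hftc]
  abel

end helpers

private lemma scalar_exp_integral (c : ℝ) (hc : 0 < c) (a b : ℝ) :
    ∫ s in a..b, Real.exp ((b - s) * c) = (Real.exp ((b - a) * c) - 1) / c := by
  have h1 : (∫ s in a..b, Real.exp ((b - s) * c))
      = ∫ s in b - b..b - a, Real.exp (s * c) :=
    intervalIntegral.integral_comp_sub_left (fun s => Real.exp (s * c)) b
  rw [h1, sub_self, intervalIntegral.integral_comp_mul_right Real.exp hc.ne', zero_mul,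
    integral_exp, Real.exp_zero, smul_eq_mul]
  ring

set_option maxHeartbeats 2000000 in
set_option synthInstance.maxHeartbeats 1000000 in
/-- Corollary 1 (S4, ZOH): for the S4 system `x' = Δ(Ax + uB)`,
`y = ⟪C, x⟫ + Du`, with `u` `L_u`-Lipschitz on `[0,1]` and the ZOH
discretization at step `τ`, the discrete output satisfies
`|y_k^τ − y(τk)| ≤ ‖C‖‖B‖L_u (exp(Δ‖A‖) − 1)/‖A‖ · τ` for `1 ≤ k ≤ ⌊1/τ⌋`,
with no higher-order remainder. -/
theorem s4_zoh_discretization_error {n : ℕ}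
    (A Ainv : EuclideanSpace ℝ (Fin n) →L[ℝ] EuclideanSpace ℝ (Fin n))
    (hAinv : Ainv * A = 1) (hAinv' : A * Ainv = 1) (hA : 0 < ‖A‖)
    (B C : EuclideanSpace ℝ (Fin n)) (D Δ : ℝ) (hΔ : 0 < Δ)
    (u : ℝ → ℝ) (Lu : ℝ) (hLu : 0 ≤ Lu)
    (huLip : ∀ s ∈ Icc (0:ℝ) 1, ∀ t ∈ Icc (0:ℝ) 1, |u s - u t| ≤ Lu * |s - t|)
    (τ : ℝ) (hτ0 : 0 < τ) (hτ1 : τ < 1)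
    (x : ℝ → EuclideanSpace ℝ (Fin n))
    (hx : ∀ t ∈ Icc (0:ℝ) 1, HasDerivAt x (Δ • (A (x t) + (u t) • B)) t)
    (hx0 : x 0 = 0)
    (y : ℝ → ℝ) (hy : ∀ t, y t = (inner ℝ C (x t) : ℝ) + D * u t)
    (xd : ℕ → EuclideanSpace ℝ (Fin n)) (hxd0 : xd 0 = 0)
    (hxd : ∀ k : ℕ, xd (k + 1) =
      exp ((τ * Δ) • A) (xd k)
        + (u (τ * k)) • (Ainv ((exp ((τ * Δ) • A) - 1) B)))
    (yd : ℕ → ℝ) (hyd : ∀ k : ℕ, yd k = (inner ℝ C (xd k) : ℝ) + D * u (τ * k)) :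
    ∀ k : ℕ, 1 ≤ k → k ≤ ⌊1 / τ⌋₊ →
      |yd k - y (τ * k)|
        ≤ (‖C‖ * ‖B‖ * Lu * (Real.exp (Δ * ‖A‖) - 1) / ‖A‖) * τ := by
  set c : ℝ := Δ * ‖A‖ with hcdef
  have hc0 : 0 < c := mul_pos hΔ hA
  set M : EuclideanSpace ℝ (Fin n) →L[ℝ] EuclideanSpace ℝ (Fin n) := Δ • A with hM
  have hτM : (τ * Δ) • A = τ • M := by rw [hM, smul_smul]
  have hMnorm : ∀ t : ℝ, 0 ≤ t → ‖exp (t • M)‖ ≤ Real.exp (t * c) := by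
    intro t ht
    refine (my_norm_exp_le _).trans_eq ?_
    have : ‖t • M‖ = t * c := by
      rw [hM, smul_smul]
      calc ‖(t * Δ) • A‖ = ‖t * Δ‖ * ‖A‖ := by rw [← norm_smul]
        _ = t * c := by
            rw [Real.norm_eq_abs, abs_of_nonneg (by positivity), hcdef]; ring
    rw [this]
  have huc : ContinuousOn u (Icc 0 1) := by
    have hL : LipschitzOnWith (Real.toNNReal Lu) u (Icc 0 1) := by
      rw [lipschitzOnWith_iff_dist_le_mul]
      intro s hs t ht
      rw [Real.dist_eq, Real.dist_eq, Real.coe_toNNReal _ hLu]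
      exact huLip s hs t ht
    exact hL.continuousOn
  -- main induction
  have key : ∀ m : ℕ, τ * m ≤ 1 →
      ‖xd m - x (τ * m)‖ ≤ Lu * ‖B‖ * τ * (Real.exp (τ * m * c) - 1) / ‖A‖ := by
    intro m
    induction m with
    | zero => intro _; simp [hxd0, hx0]
    | succ m ih =>
      intro hm1
      have hcast : (↑(m + 1) : ℝ) = (m : ℝ) + 1 := by push_cast; ring
      have hmm : (m : ℝ) ≥ 0 := Nat.cast_nonneg m
      have hmτ : τ * m ≤ 1 := by nlinarith
      set a : ℝ := τ * m with ha
      set b : ℝ := τ * (m + 1 : ℕ) with hb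
      have hba : b - a = τ := by rw [hb, ha, hcast]; ring
      have hab : a ≤ b := by nlinarith
      have ha0 : 0 ≤ a := by positivity
      have hb1 : b ≤ 1 := hm1
      -- continuous evolution
      have hcons := one_step A B Δ u x a b hab ha0 hb1 huc hx
      rw [hba] at hcons
      -- discrete evolution rewritten as an integral
      have hexpc : Continuous fun s : ℝ => exp ((b - s) • M) B := exp_apply_continuous' M B b
      have hint1 : IntervalIntegrable (fun s : ℝ => (Δ * u a) • (exp ((b - s) • M) B))
          volume a b := (hexpc.const_smul (Δ * u a)).intervalIntegrable a b
      have hint2 : IntervalIntegrable (fun s : ℝ => (Δ * u s) • (exp ((b - s) • M) B))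
          volume a b := by
        have : ContinuousOn (fun s : ℝ => (Δ * u s) • (exp ((b - s) • M) B)) (uIcc a b) := by
          rw [uIcc_of_le hab]
          exact (continuousOn_const.mul (huc.mono (Icc_subset_Icc ha0 hb1))).smul
            hexpc.continuousOn
        exact this.intervalIntegrable
      have hdiscint : (u a) • (Ainv ((exp (τ • M) - 1) B))
          = ∫ s in a..b, (Δ * u a) • (exp ((b - s) • M) B) := by
        rw [zoh_integral A Ainv hAinv B Δ τ, ← intervalIntegral.integral_smul]
        have h := intervalIntegral.integral_comp_sub_left (a := a) (b := b)
          (fun s => u a • (Δ • (exp (s • M) B))) b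
        rw [sub_self, hba] at h
        rw [← h]
        apply intervalIntegral.integral_congr
        intro s _
        simp only [smul_smul]
        ring_nf
      -- error recursion
      have herr : xd (m + 1) - x b = exp (τ • M) (xd m - x a)
          + ∫ s in a..b,
              ((Δ * u a) • (exp ((b - s) • M) B) - (Δ * u s) • (exp ((b - s) • M) B)) := by
        rw [hxd m, hτM, ← ha, hdiscint, hcons, intervalIntegral.integral_sub hint1 hint2,
          map_sub]
        abel
      -- bound the local error integral
      have hlocal : ‖∫ s in a..b,
            ((Δ * u a) • (exp ((b - s) • M) B) - (Δ * u s) • (exp ((b - s) • M) B))‖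
          ≤ Lu * ‖B‖ * τ * (Real.exp (τ * c) - 1) / ‖A‖ := by
        have hg : IntervalIntegrable
            (fun s : ℝ => (Lu * τ * ‖B‖ * Δ) * Real.exp ((b - s) * c)) volume a b := by
          apply Continuous.intervalIntegrable
          exact continuous_const.mul
            ((Real.continuous_exp).comp ((continuous_const.sub continuous_id).mul
              continuous_const))
        have hbnd := intervalIntegral.norm_integral_le_of_norm_le (μ := volume) (a := a) (b := b)
          (f := fun s : ℝ => (Δ * u a) • (exp ((b - s) • M) B)
            - (Δ * u s) • (exp ((b - s) • M) B)) hab ?_ hg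
        · refine hbnd.trans ?_
          rw [intervalIntegral.integral_const_mul, scalar_exp_integral c hc0 a b, hba]
          have h1 : (1:ℝ) ≤ Real.exp (τ * c) := Real.one_le_exp (by positivity)
          have habs : Lu * τ * ‖B‖ * Δ * ((Real.exp (τ * c) - 1) / c) ≥ 0 := by
            apply mul_nonneg (by positivity)
            apply div_nonneg (by linarith) hc0.le
          rw [hcdef]
          apply le_of_eq
          field_simp
        · filter_upwards with s hs
          have hs01 : s ∈ Icc (0:ℝ) 1 := ⟨le_trans ha0 hs.1.le, hs.2.trans hb1⟩
          have ha01 : a ∈ Icc (0:ℝ) 1 := ⟨ha0, hab.trans hb1⟩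
          have hu1 : |u a - u s| ≤ Lu * τ := by
            refine (huLip a ha01 s hs01).trans ?_
            have : |a - s| ≤ τ := by
              rw [abs_le]; constructor <;> nlinarith [hs.1, hs.2]
            nlinarith
          have hu2 : ‖exp ((b - s) • M) B‖ ≤ Real.exp ((b - s) * c) * ‖B‖ := by
            refine (ContinuousLinearMap.le_opNorm _ _).trans ?_
            exact mul_le_mul_of_nonneg_right (hMnorm (b - s) (by linarith [hs.2]))
              (norm_nonneg B)
          have heq : (Δ * u a) • (exp ((b - s) • M) B) - (Δ * u s) • (exp ((b - s) • M) B)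
              = (Δ * (u a - u s)) • (exp ((b - s) • M) B) := by
            rw [← sub_smul]; ring_nf
          rw [heq, norm_smul, Real.norm_eq_abs, abs_mul, abs_of_nonneg hΔ.le]
          calc Δ * |u a - u s| * ‖exp ((b - s) • M) B‖
              ≤ Δ * (Lu * τ) * (Real.exp ((b - s) * c) * ‖B‖) := by
                apply mul_le_mul (mul_le_mul_of_nonneg_left hu1 hΔ.le) hu2 (norm_nonneg _)
                positivity
            _ = Lu * τ * ‖B‖ * Δ * Real.exp ((b - s) * c) := by ring
      -- combine
      have hexpadd : Real.exp (τ * c) * Real.exp (τ * ↑m * c) = Real.exp (τ * ↑(m + 1) * c) := by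
        rw [← Real.exp_add, hcast]; ring_nf
      calc ‖xd (m + 1) - x b‖
          ≤ ‖exp (τ • M) (xd m - x a)‖ + ‖∫ s in a..b,
              ((Δ * u a) • (exp ((b - s) • M) B) - (Δ * u s) • (exp ((b - s) • M) B))‖ := by
            rw [herr]; exact norm_add_le _ _
        _ ≤ Real.exp (τ * c) * (Lu * ‖B‖ * τ * (Real.exp (τ * ↑m * c) - 1) / ‖A‖)
              + Lu * ‖B‖ * τ * (Real.exp (τ * c) - 1) / ‖A‖ := by
            refine add_le_add ?_ hlocal
            refine (ContinuousLinearMap.le_opNorm _ _).trans ?_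
            exact mul_le_mul (hMnorm τ hτ0.le) (ih hmτ) (norm_nonneg _) (Real.exp_pos _).le
        _ = Lu * ‖B‖ * τ * (Real.exp (τ * ↑(m + 1) * c) - 1) / ‖A‖ := by
            rw [← hexpadd]
            field_simp
            ring
  -- conclusion
  intro k hk1 hk2
  have hτk : τ * k ≤ 1 := by
    have h1 : (k : ℝ) ≤ (⌊1 / τ⌋₊ : ℝ) := Nat.cast_le.mpr hk2
    have h2 : ((⌊1 / τ⌋₊ : ℕ) : ℝ) ≤ 1 / τ := Nat.floor_le (by positivity)
    calc τ * k ≤ τ * (1 / τ) := by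
          exact mul_le_mul_of_nonneg_left (h1.trans h2) hτ0.le
      _ = 1 := by field_simp
  have hkey := key k hτk
  rw [hyd k, hy (τ * k)]
  have h3 : (inner ℝ C (xd k) : ℝ) + D * u (τ * k) - ((inner ℝ C (x (τ * k)) : ℝ) + D * u (τ * k))
      = inner ℝ C (xd k - x (τ * k)) := by
    rw [inner_sub_right]; ring
  rw [h3]
  calc |(inner ℝ C (xd k - x (τ * k)) : ℝ)|
      ≤ ‖C‖ * ‖xd k - x (τ * k)‖ := abs_real_inner_le_norm _ _
    _ ≤ ‖C‖ * (Lu * ‖B‖ * τ * (Real.exp (τ * ↑k * c) - 1) / ‖A‖) :=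
        mul_le_mul_of_nonneg_left hkey (norm_nonneg C)
    _ ≤ ‖C‖ * (Lu * ‖B‖ * τ * (Real.exp c - 1) / ‖A‖) := by
        gcongr
        nlinarith [hc0, hτk]
    _ = (‖C‖ * ‖B‖ * Lu * (Real.exp (Δ * ‖A‖) - 1) / ‖A‖) * τ := by
        rw [hcdef]; ring
end
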